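/- Let (Ω, F, P) be a probability space, let S be a finite set with a nonempty subset E, let L ∈ ℕ with L ≥ 1, let p ∈ (0,1], and let {x_k}_{k∈ℕ} be an S-valued stochastic process. Suppose there exist a sequence {c_k} of nonnegative reals and an index k̃ such that for all k ≥ k̃ (whenever the conditioning events have positive probability): P(x_{k+L} ∈ E | x_k ∈ E) ≥ 1 − c_k and P(x_{k+L} ∈ E | x_k ∉ E) ≥ p·(1 − c_k). Then limsup_{k→∞} P(x_k ∉ E) ≤ (limsup_{k→∞} c_k)/p. -/

import Mathlib

set_option maxHeartbeats 800000


open MeasureTheory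

/-- From the proof of Theorem 3 (part 3): let `{x_k}` be an `S`-valued process on a
probability space, `E ⊆ S` nonempty, `L ≥ 1`, `p ∈ (0,1]`, and `{c_k}` nonnegative
reals such that for all `k ≥ k̃` (whenever the conditioning events have positive
probability) `P(x_{k+L} ∈ E | x_k ∈ E) ≥ 1 − c_k` and
`P(x_{k+L} ∈ E | x_k ∉ E) ≥ p (1 − c_k)`. Then
`limsup_k P(x_k ∉ E) ≤ (limsup_k c_k)/p` (limsups in `[0,∞]`). Conditional
probability is `P(A | B) = P(A ∩ B)/P(B)`. -/
theorem limsup_escape_probability_bound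
    {Ω : Type*} [MeasurableSpace Ω] (P : Measure Ω) [IsProbabilityMeasure P]
    {S : Type*} [Fintype S] (E : Set S) (hE : E.Nonempty)
    (x : ℕ → Ω → S) (hmeas : ∀ k, MeasurableSet {ω | x k ω ∈ E})
    (L : ℕ) (hL : 1 ≤ L) (p : ℝ) (hp : p ∈ Set.Ioc (0 : ℝ) 1)
    (c : ℕ → ℝ) (hc0 : ∀ k, 0 ≤ c k)
    (ktil : ℕ)
    (hin : ∀ k ≥ ktil, P {ω | x k ω ∈ E} ≠ 0 →
      1 - c k ≤
        (P ({ω | x (k + L) ω ∈ E} ∩ {ω | x k ω ∈ E})).toReal /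
          (P {ω | x k ω ∈ E}).toReal)
    (hout : ∀ k ≥ ktil, P {ω | x k ω ∉ E} ≠ 0 →
      p * (1 - c k) ≤
        (P ({ω | x (k + L) ω ∈ E} ∩ {ω | x k ω ∉ E})).toReal /
          (P {ω | x k ω ∉ E}).toReal) :
    Filter.limsup (fun k => P {ω | x k ω ∉ E}) Filter.atTop ≤
      Filter.limsup (fun k => ENNReal.ofReal (c k)) Filter.atTop / ENNReal.ofReal p := by
  obtain ⟨hp0, hp1⟩ := hp
  set q : ℕ → ENNReal := fun k => P {ω | x k ω ∉ E} with hq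
  have hcompl : ∀ k, {ω | x k ω ∉ E} = {ω | x k ω ∈ E}ᶜ := fun k => rfl
  have hq1 : ∀ k, q k ≤ 1 := fun k => prob_le_one
  -- pointwise inequality
  have key : ∀ k ≥ ktil, q (k + L) ≤ ENNReal.ofReal (c k) + ENNReal.ofReal (1 - p) * q k := by
    intro k hk
    set I := {ω | x k ω ∈ E}
    set J := {ω | x (k + L) ω ∈ E}
    have hImeas := hmeas k
    have hJc : {ω | x (k + L) ω ∉ E} = Jᶜ := rfl
    have hIc : {ω | x k ω ∉ E} = Iᶜ := rfl
    set a := (P I).toReal with ha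
    set b := (P Iᶜ).toReal with hb
    set A := (P (J ∩ I)).toReal with hA
    set B := (P (J ∩ Iᶜ)).toReal with hB
    have hab : a + b = 1 := by
      have h1 : P I + P Iᶜ = 1 := prob_add_prob_compl hImeas
      have h2 := congrArg ENNReal.toReal h1
      rwa [ENNReal.toReal_add (measure_ne_top _ _) (measure_ne_top _ _), ENNReal.toReal_one]
        at h2
    have hABsum : A + B = (P J).toReal := by
      rw [hA, hB, ← ENNReal.toReal_add (measure_ne_top _ _) (measure_ne_top _ _)]
      congr 1
      rw [← measure_inter_add_diff J hImeas, Set.diff_eq]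
    have hqL : (q (k + L)).toReal = 1 - (A + B) := by
      have h1 : P J + P Jᶜ = 1 := prob_add_prob_compl (hmeas (k + L))
      have h2 := congrArg ENNReal.toReal h1
      rw [ENNReal.toReal_add (measure_ne_top _ _) (measure_ne_top _ _), ENNReal.toReal_one] at h2
      show (P Jᶜ).toReal = _
      rw [hABsum]
      linarith
    have hb0 : 0 ≤ b := ENNReal.toReal_nonneg
    have hA0 : 0 ≤ A := ENNReal.toReal_nonneg
    have hB0 : 0 ≤ B := ENNReal.toReal_nonneg
    -- A ≥ (1 - c k) * a
    have hAbound : (1 - c k) * a ≤ A := by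
      by_cases hI0 : P I = 0
      · have ha0 : a = 0 := by rw [ha, hI0]; simp
        have : A = 0 := by
          rw [hA]
          have : P (J ∩ I) = 0 := measure_mono_null Set.inter_subset_right hI0
          simp [this]
        rw [ha0, this]; simp
      · have hapos : 0 < a := ENNReal.toReal_pos hI0 (measure_ne_top _ _)
        have := hin k hk hI0
        calc (1 - c k) * a ≤ (A / a) * a := by
              apply mul_le_mul_of_nonneg_right this hapos.le
          _ = A := by field_simp
    -- B ≥ p * (1 - c k) * b
    have hBbound : p * (1 - c k) * b ≤ B := by
      by_cases hI0 : P Iᶜ = 0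
      · have hb0' : b = 0 := by rw [hb, hI0]; simp
        have : B = 0 := by
          rw [hB]
          have : P (J ∩ Iᶜ) = 0 := measure_mono_null Set.inter_subset_right hI0
          simp [this]
        rw [hb0', this]; simp
      · have hbpos : 0 < b := ENNReal.toReal_pos hI0 (measure_ne_top _ _)
        have := hout k hk (by rw [hIc]; exact hI0)
        rw [hIc] at this
        calc p * (1 - c k) * b ≤ (B / b) * b := by
              apply mul_le_mul_of_nonneg_right this hbpos.le
          _ = B := by field_simp
    -- real inequality
    have hreal : (q (k + L)).toReal ≤ c k + (1 - p) * b := by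
      rw [hqL]
      have h1 : 1 - (A + B) ≤ 1 - ((1 - c k) * a + p * (1 - c k) * b) := by linarith
      have h2 : 1 - ((1 - c k) * a + p * (1 - c k) * b) = c k + (1 - c k) * (1 - p) * b := by
        have : a = 1 - b := by linarith
        rw [this]; ring
      have h3 : (1 - c k) * (1 - p) * b ≤ (1 - p) * b := by
        have hck := hc0 k
        nlinarith [mul_nonneg (mul_nonneg hck (by linarith : (0:ℝ) ≤ 1 - p)) hb0]
      linarith
    -- lift to ENNReal
    have hqb : ENNReal.ofReal b = q k := by
      rw [hb, ← hIc]
      exact ENNReal.ofReal_toReal (measure_ne_top _ _)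
    calc q (k + L) = ENNReal.ofReal ((q (k + L)).toReal) :=
          (ENNReal.ofReal_toReal (measure_ne_top _ _)).symm
      _ ≤ ENNReal.ofReal (c k + (1 - p) * b) := ENNReal.ofReal_le_ofReal hreal
      _ ≤ ENNReal.ofReal (c k) + ENNReal.ofReal ((1 - p) * b) := ENNReal.ofReal_add_le
      _ = ENNReal.ofReal (c k) + ENNReal.ofReal (1 - p) * ENNReal.ofReal b := by
          rw [ENNReal.ofReal_mul (by linarith)]
      _ = ENNReal.ofReal (c k) + ENNReal.ofReal (1 - p) * q k := by rw [hqb]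
  -- limsup step
  set Q := Filter.limsup q Filter.atTop with hQ
  set C := Filter.limsup (fun k => ENNReal.ofReal (c k)) Filter.atTop with hC
  have hQ1 : Q ≤ 1 := Filter.limsup_le_of_le (by isBoundedDefault)
    (Filter.Eventually.of_forall hq1)
  have hshift : Filter.limsup (fun k => q (k + L)) Filter.atTop = Q :=
    Filter.limsup_nat_add q L
  have hof1 : ENNReal.ofReal (1 - p) = 1 - ENNReal.ofReal p := by
    rw [← ENNReal.ofReal_one, ← ENNReal.ofReal_sub _ hp0.le]
  have hple : ENNReal.ofReal p ≤ 1 := by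
    rw [← ENNReal.ofReal_one]; exact ENNReal.ofReal_le_ofReal hp1
  have hsplit : ENNReal.ofReal p * Q + (1 - ENNReal.ofReal p) * Q = Q := by
    rw [← add_mul, add_tsub_cancel_of_le hple, one_mul]
  have hfin : (1 - ENNReal.ofReal p) * Q ≠ ⊤ := by
    apply ENNReal.mul_ne_top (by simp [ENNReal.sub_ne_top])
    exact (hQ1.trans_lt ENNReal.one_lt_top).ne
  have hpQ : ENNReal.ofReal p * Q ≤ C := by
    apply ENNReal.le_of_forall_pos_le_add
    intro ε hε hCtop
    have hCε : C < C + ε := ENNReal.lt_add_right hCtop.ne (by exact_mod_cast hε.ne')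
    have hev : ∀ᶠ k in Filter.atTop, ENNReal.ofReal (c k) < C + ε :=
      Filter.eventually_lt_of_limsup_lt hCε
    have hmain : Q ≤ (C + ε) + ENNReal.ofReal (1 - p) * Q := by
      calc Q = Filter.limsup (fun k => q (k + L)) Filter.atTop := hshift.symm
        _ ≤ Filter.limsup (fun k => (C + ε) + ENNReal.ofReal (1 - p) * q k)
              Filter.atTop := by
            apply Filter.limsup_le_limsup
            · filter_upwards [hev, Filter.eventually_ge_atTop ktil] with k h1 h2
              exact (key k h2).trans (add_le_add_left h1.le _)
            · exact Filter.isCobounded_le_of_bot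
            · exact Filter.isBounded_le_of_top
        _ = (C + ε) + Filter.limsup (fun k => ENNReal.ofReal (1 - p) * q k) Filter.atTop :=
            limsup_const_add Filter.atTop _ _ (by isBoundedDefault) (by isBoundedDefault)
        _ = (C + ε) + ENNReal.ofReal (1 - p) * Q := by
            rw [ENNReal.limsup_const_mul_of_ne_top ENNReal.ofReal_ne_top]
    have h2 : ENNReal.ofReal p * Q + (1 - ENNReal.ofReal p) * Q ≤
        (C + ε) + (1 - ENNReal.ofReal p) * Q := by
      rw [hsplit, ← hof1]; exact hmain
    exact (ENNReal.add_le_add_iff_right hfin).mp h2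
  rw [ENNReal.le_div_iff_mul_le (Or.inl (by simpa using hp0)) (Or.inl ENNReal.ofReal_ne_top)]
  rw [mul_comm]
  exact hpQ
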